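/- For every nonnegative integer L and every nonzero complex number q that is not a root of unity, Σ_{n≥0} (-1)^n q^{(3n²+n)/2} (q³;q³)_L/((q;q)_{L-2n}(q³;q³)_n) = Σ_{j=-L}^{L} q^{L-j} (L, j; j; q³)_2. -/

import Mathlib

/-- The finite q-Pochhammer symbol `(a;q)_n`. -/
noncomputable def qPoch (a q : ℂ) (n : ℕ) : ℂ :=
  ∏ j ∈ Finset.range n, (1 - a * q ^ j)

/-- The infinite q-Pochhammer symbol `(a;q)_∞`. -/
noncomputable def qPochInf (a q : ℂ) : ℂ :=
  ∏' j : ℕ, (1 - a * q ^ j)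

/-- `1/(q;q)_n` for an integer `n`, with the convention that it is `0` for `n < 0`. -/
noncomputable def qPochInvZ (q : ℂ) (n : ℤ) : ℂ :=
  if 0 ≤ n then (qPoch q q n.toNat)⁻¹ else 0

/-- The q-trinomial coefficient `(L, b; a; q)_2`. -/
noncomputable def qTrinomial (L : ℕ) (b a : ℤ) (q : ℂ) : ℂ :=
  ∑' n : ℕ, q ^ ((n : ℤ) * ((n : ℤ) + b)) * qPoch q q L * qPochInvZ q (n : ℤ) *
    qPochInvZ q ((n : ℤ) + a) * qPochInvZ q ((L : ℤ) - 2 * (n : ℤ) - a)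

/-- The q-trinomial coefficient `T_n(L, a; q)`, where `s` is a fixed square root of `q`. -/
noncomputable def qTriT (n : ℤ) (L : ℕ) (a : ℤ) (q s : ℂ) : ℂ :=
  s ^ ((L : ℤ) * ((L : ℤ) - n) - a * (a - n)) * qTrinomial L (a - n) a q⁻¹

/-- The Gaussian (q-binomial) coefficient `[N choose k]_q`, zero unless `0 ≤ k ≤ N`. -/
noncomputable def qBinom (N k : ℤ) (q : ℂ) : ℂ :=
  if 0 ≤ k ∧ k ≤ N then
    qPoch q q N.toNat * (qPoch q q k.toNat)⁻¹ * (qPoch q q (N - k).toNat)⁻¹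
  else 0

/-- The quadratic form `Q(m,n) = 2m² + 6mn + 6n²` from Capparelli's theorems. -/
def Qcap (m n : ℕ) : ℕ := 2 * m ^ 2 + 6 * m * n + 6 * n ^ 2

set_option linter.unusedSectionVars false


noncomputable section
open PowerSeries Finset

namespace Capparelli

variable (q : ℂ)

/-- `(q³;q³)_n` -/
def P (n : ℕ) : ℂ := qPoch (q^3) (q^3) n

def E (c : ℂ) : PowerSeries ℂ := PowerSeries.mk fun n => c ^ n * (P q n)⁻¹

def D : PowerSeries ℂ := PowerSeries.mk fun n => (qPoch q q n)⁻¹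

def Fs : PowerSeries ℂ := PowerSeries.mk fun u =>
  if Even u then (-1 : ℂ) ^ (u / 2) * q ^ ((3 * (u/2) ^ 2 + u/2) / 2) * (P q (u/2))⁻¹ else 0

def G : PowerSeries ℂ := PowerSeries.mk fun N =>
  ∑ m ∈ range (N+1), q ^ (2*m) * (q^3) ^ (m * (N - m)) * (P q m)⁻¹ * (P q (N - m))⁻¹

def binv (m i : ℕ) : ℂ := if i ≤ m then (P q i)⁻¹ * (P q (m - i))⁻¹ else 0

def bin (m i : ℕ) : ℂ := if i ≤ m then P q m * (P q i)⁻¹ * (P q (m - i))⁻¹ else 0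

def PiProd (m : ℕ) : PowerSeries ℂ :=
  ∏ j ∈ range m, (1 - PowerSeries.C ((q^3)^j) * PowerSeries.X)

variable {q} (hq : q ≠ 0) (hroot : ∀ k : ℕ, 0 < k → q ^ k ≠ 1)

section Basic
include hroot

lemma qpoch_ne (a : ℕ) (ha : 0 < a) (n : ℕ) : qPoch (q^a) (q^a) n ≠ 0 := by
  unfold qPoch
  refine Finset.prod_ne_zero_iff.2 fun j _ => ?_
  have : q ^ a * (q ^ a) ^ j = q ^ (a * (j+1)) := by ring
  rw [this]
  intro h
  have h2 : q ^ (a * (j+1)) = 1 := by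
    linear_combination -h
  exact hroot (a * (j+1)) (by positivity) h2

lemma hP (n : ℕ) : P q n ≠ 0 := qpoch_ne hroot 3 (by norm_num) n

lemma hPq (n : ℕ) : qPoch q q n ≠ 0 := by
  have := qpoch_ne hroot 1 (by norm_num) n
  simpa using this

end Basic

lemma pochSucc (a c : ℂ) (n : ℕ) : qPoch a c (n+1) = qPoch a c n * (1 - a * c ^ n) := by
  unfold qPoch; rw [Finset.prod_range_succ]

lemma P_succ (n : ℕ) : P q (n+1) = P q n * (1 - (q^3)^(n+1)) := by
  rw [P, pochSucc, ← pow_succ']; rfl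

section Euler

include hroot in
lemma one_sub_qpow_ne (n : ℕ) (hn : 0 < n) : (1:ℂ) - q ^ n ≠ 0 := by
  intro h
  exact hroot n hn (by linear_combination -h)

lemma coeff_E (c : ℂ) (n : ℕ) : PowerSeries.coeff n (E q c) = c ^ n * (P q n)⁻¹ :=
  coeff_mk _ _

include hroot in
lemma eulerE (c : ℂ) : E q (c * q^3) = (1 - PowerSeries.C c * X) * E q c := by
  ext n
  rw [sub_mul, one_mul, map_sub, coeff_E, mul_assoc, coeff_C_mul]
  cases n with
  | zero => simp [coeff_E]
  | succ n =>
    rw [coeff_succ_X_mul, coeff_E, coeff_E, P_succ]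
    have h1 : (1:ℂ) - (q^3)^(n+1) ≠ 0 := by
      rw [← pow_mul]
      exact one_sub_qpow_ne hroot _ (by positivity)
    have h2 := hP hroot (q := q) n
    field_simp
    ring

include hroot in
lemma hom3 (M : ℕ) :
    PowerSeries.coeff M (E q q * E q (q^2) * E q (q^3)) =
      q ^ M * PowerSeries.coeff M (E q 1 * E q q * E q (q^2)) := by
  rw [coeff_mul, coeff_mul, Finset.mul_sum]
  refine Finset.sum_congr rfl fun p hp => ?_
  rw [Finset.HasAntidiagonal.mem_antidiagonal] at hp
  rw [coeff_mul, coeff_mul, Finset.sum_mul, Finset.sum_mul, Finset.mul_sum]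
  refine Finset.sum_congr rfl fun r hr => ?_
  rw [Finset.HasAntidiagonal.mem_antidiagonal] at hr
  rw [coeff_E, coeff_E, coeff_E, coeff_E, coeff_E, coeff_E]
  have : q ^ r.1 * ((q^2) ^ r.2) * ((q^3) ^ p.2) = q ^ (r.1 + 2*r.2 + 3*p.2) := by
    rw [← pow_mul, ← pow_mul, ← pow_add, ← pow_add]
  have h2 : (1:ℂ) ^ r.1 * (q ^ r.2) * ((q^2) ^ p.2) = q ^ (r.2 + 2*p.2) := by
    rw [one_pow, ← pow_mul, one_mul, ← pow_add]
  have hexp : r.1 + 2*r.2 + 3*p.2 = M + (r.2 + 2*p.2) := by omega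
  calc q ^ r.1 * (P q r.1)⁻¹ * ((q^2) ^ r.2 * (P q r.2)⁻¹) * ((q^3) ^ p.2 * (P q p.2)⁻¹)
      = q ^ r.1 * (q^2) ^ r.2 * (q^3) ^ p.2 * ((P q r.1)⁻¹ * (P q r.2)⁻¹ * (P q p.2)⁻¹) := by ring
    _ = q ^ M * q ^ (r.2 + 2*p.2) * ((P q r.1)⁻¹ * (P q r.2)⁻¹ * (P q p.2)⁻¹) := by
        rw [this, hexp, pow_add]
    _ = q ^ M * ((1:ℂ) ^ r.1 * (P q r.1)⁻¹ * (q ^ r.2 * (P q r.2)⁻¹) * ((q^2) ^ p.2 * (P q p.2)⁻¹)) := by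
        rw [← h2]; ring

include hroot in
lemma lemma1 : D q = E q 1 * E q q * E q (q^2) := by
  have key : ∀ M, PowerSeries.coeff M (E q 1 * E q q * E q (q^2)) = (qPoch q q M)⁻¹ := by
    intro M
    induction M with
    | zero =>
      simp [coeff_mul, coeff_E, P, qPoch]
    | succ m ih =>
      have e3 : E q (q^3) = (1 - X) * E q 1 := by
        have := eulerE hroot (q := q) 1
        simpa using this
      have hiden : E q q * E q (q^2) * E q (q^3) = (1 - X) * (E q 1 * E q q * E q (q^2)) := by
        rw [e3]; ring
      have h1 := hom3 hroot (q := q) (m+1)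
      rw [hiden] at h1
      rw [sub_mul, one_mul, map_sub, coeff_succ_X_mul, ih] at h1
      have hne : (1:ℂ) - q ^ (m+1) ≠ 0 := one_sub_qpow_ne hroot _ (by positivity)
      have hpne : qPoch q q m ≠ 0 := hPq hroot m
      rw [pochSucc]
      have hq1 : (1:ℂ) - q * q ^ m = 1 - q ^ (m+1) := by rw [pow_succ]; ring
      rw [hq1, mul_inv]
      have hc : (PowerSeries.coeff (m+1)) (E q 1 * E q q * E q (q^2)) * (1 - q^(m+1)) =
          (qPoch q q m)⁻¹ := by linear_combination h1
      rw [← hc, mul_inv_cancel_right₀ hne]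
  ext M
  rw [key M, D, coeff_mk]

end Euler

section Rothe

lemma P_zero : P q 0 = 1 := by simp [P, qPoch]

include hroot in
lemma pascal (m i : ℕ) :
    bin q (m+1) (i+1) = bin q m (i+1) + (q^3)^(m-i) * bin q m i := by
  rcases le_or_gt i m with him | him
  · rcases eq_or_lt_of_le him with rfl | hlt
    · -- i = m
      have h1 := hP hroot (q := q) (i+1)
      have h2 := hP hroot (q := q) i
      simp only [bin, le_refl, if_pos, Nat.sub_self, P_zero,
        if_neg (show ¬ i+1 ≤ i by omega)]
      field_simp
      ring
    · -- i < m
      obtain ⟨t, ht⟩ : ∃ t, m = i + t + 1 := ⟨m - i - 1, by omega⟩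
      subst ht
      simp only [bin, if_pos (by omega : i + 1 ≤ i + t + 1 + 1),
        if_pos (by omega : i + 1 ≤ i + t + 1), if_pos (by omega : i ≤ i + t + 1)]
      have e1 : i + t + 1 + 1 - (i + 1) = t + 1 := by omega
      have e2 : i + t + 1 - (i + 1) = t := by omega
      have e3 : i + t + 1 - i = t + 1 := by omega
      rw [e1, e2, e3]
      have hPm := hP hroot (q := q) (i + t + 1)
      have hPi := hP hroot (q := q) i
      have hPi1 := hP hroot (q := q) (i + 1)
      have hPt := hP hroot (q := q) t
      have hPt1 := hP hroot (q := q) (t + 1)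
      rw [P_succ (n := i + t + 1), P_succ (n := t), P_succ (n := i)]
      have h1 : (1:ℂ) - (q^3)^(i+t+1+1) ≠ 0 := by
        rw [← pow_mul]; exact one_sub_qpow_ne hroot _ (by positivity)
      have h2 : (1:ℂ) - (q^3)^(t+1) ≠ 0 := by
        rw [← pow_mul]; exact one_sub_qpow_ne hroot _ (by positivity)
      have h3 : (1:ℂ) - (q^3)^(i+1) ≠ 0 := by
        rw [← pow_mul]; exact one_sub_qpow_ne hroot _ (by positivity)
      field_simp
      ring_nf
  · -- m < i
    simp only [bin, if_neg (by omega : ¬ i + 1 ≤ m + 1), if_neg (by omega : ¬ i + 1 ≤ m),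
      if_neg (by omega : ¬ i ≤ m)]
    ring

include hroot in
lemma rothe (m i : ℕ) :
    PowerSeries.coeff i (PiProd q m) =
      (-1)^i * ((q^3):ℂ)^(i*(i-1)/2) * bin q m i := by
  induction m generalizing i with
  | zero =>
    simp only [PiProd, Finset.range_zero, Finset.prod_empty, coeff_one, bin]
    rcases i with _ | i
    · simp [P_zero]
    · simp [if_neg (by omega : ¬ i + 1 ≤ 0)]
  | succ m ih =>
    have hsp : PiProd q (m+1) = PiProd q m * (1 - PowerSeries.C ((q^3)^m) * X) := by
      rw [PiProd, Finset.prod_range_succ]; rfl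
    rw [hsp]
    have expand : PiProd q m * (1 - PowerSeries.C ((q^3)^m) * X)
        = PiProd q m - PowerSeries.C ((q^3)^m) * (X * PiProd q m) := by ring
    rw [expand, map_sub, coeff_C_mul]
    rcases i with _ | n
    · -- i = 0
      rw [coeff_zero_X_mul, ih 0]
      have h1 := hP hroot (q := q) (m+1)
      have h2 := hP hroot (q := q) m
      simp only [bin, Nat.zero_le, if_pos, P_zero, Nat.sub_zero, mul_zero, sub_zero]
      field_simp
    · rw [coeff_succ_X_mul, ih (n+1), ih n, pascal hroot m n]
      rw [Nat.triangle_succ, pow_add]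
      rcases le_or_gt n m with hnm | hnm
      · have hmn : ((q^3):ℂ)^(m-n) * ((q^3):ℂ)^n = ((q^3):ℂ)^m := by
          rw [← pow_add]; congr 1; omega
        linear_combination ((-1:ℂ))^n * ((q^3):ℂ)^(n*(n-1)/2) * bin q m n * hmn
      · have hz1 : bin q m (n+1) = 0 := by rw [bin, if_neg (by omega)]
        have hz2 : bin q m n = 0 := by rw [bin, if_neg (by omega)]
        rw [hz1, hz2]
        ring

include hroot in
lemma lemmaB (m : ℕ) : E q ((q^3)^m) = PiProd q m * E q 1 := by
  induction m with
  | zero => simp [PiProd, E]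
  | succ m ih =>
    have : ((q^3):ℂ)^(m+1) = (q^3)^m * q^3 := by rw [pow_succ]
    have hsp : PiProd q (m+1) = PiProd q m * (1 - PowerSeries.C ((q^3)^m) * X) := by
      rw [PiProd, PiProd, Finset.prod_range_succ]
    rw [this, eulerE hroot, ih, hsp]
    ring

end Rothe

section Key

lemma expT (n : ℕ) : (3*n^2+n)/2 = 3*(n*(n-1)/2) + 2*n := by
  induction n with
  | zero => rfl
  | succ n ih =>
    have e1 : 3*(n+1)^2+(n+1) = (3*n^2+n) + 2*(3*n+2) := by ring
    have e2 : (n+1)*((n+1)-1) = n*(n-1)+2*n := by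
      rcases n with _ | m
      · rfl
      · simp only [Nat.succ_sub_one]
        ring
    rw [e1, e2]
    generalize hA : 3*n^2+n = A at ih ⊢
    generalize hB : n*(n-1) = B at ih ⊢
    omega

lemma evenSum (g : ℕ → ℂ) (N : ℕ) :
    ∑ u ∈ Finset.range N, (if Even u then g (u/2) else 0) = ∑ n ∈ Finset.range ((N+1)/2), g n := by
  induction N with
  | zero => simp
  | succ N ih =>
    rw [Finset.sum_range_succ, ih]
    rcases Nat.even_or_odd N with he | ho
    · obtain ⟨t, rfl⟩ := he
      rw [if_pos ⟨t, rfl⟩]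
      have h2 : (t + t + 1 + 1)/2 = ((t+t+1)/2) + 1 := by omega
      have h3 : (t+t)/2 = (t+t+1)/2 := by omega
      rw [h2, h3, Finset.sum_range_succ]
    · obtain ⟨t, rfl⟩ := ho
      rw [if_neg (Nat.not_even_iff_odd.2 ⟨t, rfl⟩), add_zero]
      have h2 : (2*t+1+1)/2 = (2*t+1+1+1)/2 := by omega
      rw [h2]

lemma evenHelper (g : ℕ → ℂ) (N : ℕ) (hg : ∀ n, N ≤ 2*n → g n = 0) :
    ∑ u ∈ Finset.range N, (if Even u then g (u/2) else 0) = ∑ n ∈ Finset.range N, g n := by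
  rw [evenSum]
  apply Finset.sum_subset (Finset.range_subset_range.2 (by omega))
  intro x hx hnx
  apply hg
  rw [Finset.mem_range] at hx hnx
  omega

include hroot in
lemma binv_eq (m i : ℕ) : (P q m)⁻¹ * bin q m i = binv q m i := by
  rw [bin, binv]
  split_ifs with h
  · have := hP hroot (q := q) m
    field_simp
  · rw [mul_zero]

include hroot in
lemma coeffK (s : ℕ) :
    PowerSeries.coeff s (Fs q * E q (q^2)) =
      ∑ i ∈ Finset.range (s+1), (-1)^i * q^(2*(s-i)) * ((q^3):ℂ)^(i*(i-1)/2) * binv q (s-i) i := by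
  rw [coeff_mul, Finset.Nat.sum_antidiagonal_eq_sum_range_succ_mk]
  rw [← evenHelper (fun i => (-1)^i * q^(2*(s-i)) * ((q^3):ℂ)^(i*(i-1)/2) * binv q (s-i) i)
      (s+1) (fun n hn => by
        have : binv q (s-n) n = 0 := by rw [binv, if_neg (by omega)]
        simp [this])]
  refine Finset.sum_congr rfl fun u hu => ?_
  rw [Finset.mem_range] at hu
  simp only [Fs, coeff_mk, coeff_E]
  split_ifs with h
  · obtain ⟨n, rfl⟩ := h
    have hn2 : (n+n)/2 = n := by omega
    rw [hn2]
    have hbinv : binv q (s - n) n = (P q n)⁻¹ * (P q (s - (n+n)))⁻¹ := by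
      rw [binv, if_pos (by omega)]
      congr 3
      omega
    rw [hbinv]
    have hpow : ((q^2):ℂ)^(s-(n+n)) = q^(2*(s-(n+n))) := by rw [← pow_mul]
    have hpow2 : ((q^3):ℂ)^(n*(n-1)/2) = q^(3*(n*(n-1)/2)) := by rw [← pow_mul]
    rw [hpow, hpow2]
    have hexp : (3*n^2+n)/2 + 2*(s-(n+n)) = 2*(s-n) + 3*(n*(n-1)/2) := by
      have := expT n
      generalize hA : (3*n^2+n)/2 = A at this ⊢
      generalize hB : n*(n-1)/2 = B at this ⊢
      omega
    calc (-1:ℂ)^n * q^((3*n^2+n)/2) * (P q n)⁻¹ * (q^(2*(s-(n+n))) * (P q (s-(n+n)))⁻¹)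
        = (-1:ℂ)^n * q^((3*n^2+n)/2 + 2*(s-(n+n))) * ((P q n)⁻¹ * (P q (s-(n+n)))⁻¹) := by
          rw [pow_add]; ring
      _ = (-1:ℂ)^n * q^(2*(s-n) + 3*(n*(n-1)/2)) * ((P q n)⁻¹ * (P q (s-(n+n)))⁻¹) := by rw [hexp]
      _ = (-1:ℂ)^n * q^(2*(s-n)) * q^(3*(n*(n-1)/2)) * ((P q n)⁻¹ * (P q (s-(n+n)))⁻¹) := by
          rw [pow_add]; ring
  · rw [zero_mul]

include hroot in
lemma lemma2 : G q = Fs q * E q (q^2) * E q 1 := by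
  ext N
  rw [coeff_mul, Finset.Nat.sum_antidiagonal_eq_sum_range_succ_mk, G, coeff_mk]
  have hL : ∀ m ∈ Finset.range (N+1),
      q^(2*m) * ((q^3):ℂ)^(m*(N-m)) * (P q m)⁻¹ * (P q (N-m))⁻¹
      = ∑ i ∈ Finset.range (N-m+1),
          ((-1)^i * q^(2*m) * ((q^3):ℂ)^(i*(i-1)/2) * binv q m i) * (P q (N-m-i))⁻¹ := by
    intro m hm
    have h1 : q^(2*m) * ((q^3):ℂ)^(m*(N-m)) * (P q m)⁻¹ * (P q (N-m))⁻¹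
        = q^(2*m) * (P q m)⁻¹ * PowerSeries.coeff (N-m) (E q ((q^3)^m)) := by
      rw [coeff_E, ← pow_mul]
      ring
    rw [h1, lemmaB hroot, coeff_mul, Finset.Nat.sum_antidiagonal_eq_sum_range_succ_mk,
      Finset.mul_sum]
    refine Finset.sum_congr rfl fun i hi => ?_
    rw [rothe hroot, coeff_E, one_pow, ← binv_eq hroot]
    ring
  rw [Finset.sum_congr rfl hL]
  -- now reindex double sums
  rw [Finset.sum_sigma']
  have hR : ∀ s ∈ Finset.range (N+1),
      PowerSeries.coeff s (Fs q * E q (q^2)) * PowerSeries.coeff (N-s) (E q 1)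
      = ∑ i ∈ Finset.range (s+1),
          ((-1)^i * q^(2*(s-i)) * ((q^3):ℂ)^(i*(i-1)/2) * binv q (s-i) i) * (P q (N-s))⁻¹ := by
    intro s hs
    rw [coeffK hroot, coeff_E, one_pow, one_mul, Finset.sum_mul]
  rw [Finset.sum_congr rfl hR, Finset.sum_sigma']
  refine Finset.sum_nbij' (fun p => ⟨p.1 + p.2, p.2⟩) (fun p => ⟨p.1 - p.2, p.2⟩) ?_ ?_ ?_ ?_ ?_
  · intro p hp
    simp only [Finset.mem_sigma, Finset.mem_range] at hp ⊢
    omega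
  · intro p hp
    simp only [Finset.mem_sigma, Finset.mem_range] at hp ⊢
    omega
  · intro p hp
    obtain ⟨m, i⟩ := p
    simp only [Finset.mem_sigma, Finset.mem_range] at hp
    have e1 : m + i - i = m := by omega
    simp only [e1]
  · intro p hp
    obtain ⟨s, i⟩ := p
    simp only [Finset.mem_sigma, Finset.mem_range] at hp
    have e1 : s - i + i = s := by omega
    simp only [e1]
  · intro p hp
    obtain ⟨m, i⟩ := p
    simp only [Finset.mem_sigma, Finset.mem_range] at hp
    simp only
    have e1 : m + i - i = m := by omega
    have e2 : N - (m + i) = N - m - i := by omega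
    rw [e1, e2]

end Key

section Final

lemma qPochInvZ_natCast (c : ℂ) (n : ℕ) : qPochInvZ c (n:ℤ) = (qPoch c c n)⁻¹ := by
  rw [qPochInvZ, if_pos (Int.natCast_nonneg n), Int.toNat_natCast]

lemma qPochInvZ_neg (c : ℂ) (z : ℤ) (h : z < 0) : qPochInvZ c z = 0 := by
  rw [qPochInvZ, if_neg (by omega)]

lemma intIccToRange (a b : ℤ) (N : ℕ) (f : ℤ → ℂ) (ha : a ≤ 0) (hb : (N:ℤ) ≤ b)
    (h0 : ∀ z : ℤ, z < 0 → f z = 0) (hN : ∀ z : ℤ, (N:ℤ) < z → f z = 0) :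
    ∑ z ∈ Finset.Icc a b, f z = ∑ n ∈ Finset.range (N+1), f (n:ℤ) := by
  have h1 : ∑ z ∈ Finset.Icc (0:ℤ) (N:ℤ), f z = ∑ z ∈ Finset.Icc a b, f z := by
    refine Finset.sum_subset (Finset.Icc_subset_Icc ha hb) (fun z hz hnz => ?_)
    simp only [Finset.mem_Icc] at hz hnz
    rcases lt_or_ge z 0 with h | h
    · exact h0 z h
    · exact hN z (by omega)
  rw [← h1]
  refine Finset.sum_nbij' (fun z => z.toNat) (fun n => (n:ℤ)) ?_ ?_ ?_ ?_ ?_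
  · intro z hz
    simp only [Finset.mem_Icc] at hz
    simp only [Finset.mem_range]
    omega
  · intro n hn
    simp only [Finset.mem_range] at hn
    simp only [Finset.mem_Icc]
    omega
  · intro z hz
    simp only [Finset.mem_Icc] at hz
    show ((z.toNat : ℤ)) = z
    omega
  · intro n hn
    show ((n:ℤ)).toNat = n
    omega
  · intro z hz
    simp only [Finset.mem_Icc] at hz
    show f z = f ((z.toNat : ℤ))
    congr 1
    omega

lemma intIccShiftToRange (L n : ℕ) (hn : n ≤ L) (f : ℤ → ℂ)
    (h0 : ∀ z : ℤ, z < 0 → f z = 0) (hN : ∀ z : ℤ, (L:ℤ) < z → f z = 0) :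
    ∑ j ∈ Finset.Icc (-(L:ℤ)) (L:ℤ), f (j + (n:ℤ)) = ∑ k ∈ Finset.range (L+1), f (k:ℤ) := by
  have h1 : ∑ x ∈ Finset.Icc (-(L:ℤ) + n) ((L:ℤ) + n), f x
      = ∑ j ∈ Finset.Icc (-(L:ℤ)) (L:ℤ), f (j + (n:ℤ)) := by
    rw [← Finset.map_add_right_Icc, Finset.sum_map]
    rfl
  rw [← h1]
  exact intIccToRange _ _ L f (by omega) (by omega) h0 hN

include hroot in
lemma final_series : Fs q * D q = G q * E q q := by
  rw [lemma1 hroot, lemma2 hroot]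
  ring

include hroot in
lemma lhs_eq (L : ℕ) :
    (∑' n : ℕ, (-1 : ℂ) ^ n * q ^ ((3 * n ^ 2 + n) / 2) * qPoch (q ^ 3) (q ^ 3) L *
        qPochInvZ q ((L : ℤ) - 2 * n) * (qPoch (q ^ 3) (q ^ 3) n)⁻¹)
      = P q L * PowerSeries.coeff L (Fs q * D q) := by
  rw [tsum_eq_sum (s := Finset.range (L+1)) (fun n hn => by
    rw [Finset.mem_range] at hn
    simp [qPochInvZ_neg q ((L:ℤ) - 2*n) (by omega : (L:ℤ) - 2*n < 0)])]
  trans (P q L * ∑ n ∈ Finset.range (L+1),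
      (-1:ℂ)^n * q^((3*n^2+n)/2) * (P q n)⁻¹ * qPochInvZ q ((L:ℤ) - 2*n))
  · rw [Finset.mul_sum]
    refine Finset.sum_congr rfl fun n hn => ?_
    show (-1:ℂ)^n * q^((3*n^2+n)/2) * P q L * qPochInvZ q ((L:ℤ) - 2*n) * (P q n)⁻¹
      = P q L * ((-1:ℂ)^n * q^((3*n^2+n)/2) * (P q n)⁻¹ * qPochInvZ q ((L:ℤ) - 2*n))
    ring
  · congr 1
    rw [coeff_mul, Finset.Nat.sum_antidiagonal_eq_sum_range_succ_mk]
    rw [← evenHelper (fun n => (-1:ℂ)^n * q^((3*n^2+n)/2) * (P q n)⁻¹ * qPochInvZ q ((L:ℤ) - 2*n))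
        (L+1) (fun n hn => by
          simp [qPochInvZ_neg q ((L:ℤ) - 2*n) (by omega : (L:ℤ) - 2*n < 0)])]
    refine Finset.sum_congr rfl fun u hu => ?_
    rw [Finset.mem_range] at hu
    dsimp only
    simp only [Fs, coeff_mk, D]
    split_ifs with h
    · obtain ⟨n, rfl⟩ := h
      have hn2 : (n+n)/2 = n := by omega
      rw [hn2]
      have hz : qPochInvZ q ((L:ℤ) - 2*n) = (qPoch q q (L - (n+n)))⁻¹ := by
        rw [qPochInvZ, if_pos (by omega)]
        congr 2
        omega
      rw [hz]
    · rw [zero_mul]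

include hq hroot in
lemma rhs_eq (L : ℕ) :
    (∑ j ∈ Finset.Icc (-(L : ℤ)) (L : ℤ), q ^ ((L : ℤ) - j) * qTrinomial L j j (q ^ 3))
      = P q L * PowerSeries.coeff L (G q * E q q) := by
  have hq3 : (q:ℂ)^3 ≠ 0 := pow_ne_zero _ hq
  have ha : ∀ j ∈ Finset.Icc (-(L:ℤ)) (L:ℤ),
      q ^ ((L : ℤ) - j) * qTrinomial L j j (q ^ 3)
      = ∑ n ∈ Finset.range (L+1), q ^ ((L:ℤ) - j) *
          ((q^3) ^ ((n:ℤ) * ((n:ℤ) + j)) * P q L * qPochInvZ (q^3) (n:ℤ) *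
           qPochInvZ (q^3) ((n:ℤ) + j) * qPochInvZ (q^3) ((L:ℤ) - 2*n - j)) := by
    intro j hj
    rw [Finset.mem_Icc] at hj
    rw [qTrinomial, tsum_eq_sum (s := Finset.range (L+1)) (fun n hn => by
      rw [Finset.mem_range] at hn
      simp [qPochInvZ_neg (q^3) ((L:ℤ) - 2*n - j)
        (by omega : (L:ℤ) - 2*n - j < 0)]), Finset.mul_sum]
    rfl
  rw [Finset.sum_congr rfl ha, Finset.sum_comm]
  have hc : ∀ n ∈ Finset.range (L+1),
      (∑ j ∈ Finset.Icc (-(L:ℤ)) (L:ℤ), q ^ ((L:ℤ) - j) *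
          ((q^3) ^ ((n:ℤ) * ((n:ℤ) + j)) * P q L * qPochInvZ (q^3) (n:ℤ) *
           qPochInvZ (q^3) ((n:ℤ) + j) * qPochInvZ (q^3) ((L:ℤ) - 2*n - j)))
      = ∑ k ∈ Finset.range (L+1), q ^ ((L:ℤ) - k + n) *
          ((q^3) ^ ((n:ℤ) * (k:ℤ)) * P q L * qPochInvZ (q^3) (n:ℤ) *
           qPochInvZ (q^3) (k:ℤ) * qPochInvZ (q^3) ((L:ℤ) - n - k)) := by
    intro n hn
    rw [Finset.mem_range] at hn
    have hL2 : ∀ j : ℤ, q ^ ((L:ℤ) - j) *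
          ((q^3) ^ ((n:ℤ) * ((n:ℤ) + j)) * P q L * qPochInvZ (q^3) (n:ℤ) *
           qPochInvZ (q^3) ((n:ℤ) + j) * qPochInvZ (q^3) ((L:ℤ) - 2*n - j))
        = (fun k : ℤ => q ^ ((L:ℤ) - k + n) *
          ((q^3) ^ ((n:ℤ) * k) * P q L * qPochInvZ (q^3) (n:ℤ) *
           qPochInvZ (q^3) k * qPochInvZ (q^3) ((L:ℤ) - n - k))) (j + (n:ℤ)) := by
      intro j
      show q ^ ((L:ℤ) - j) *
          ((q^3) ^ ((n:ℤ) * ((n:ℤ) + j)) * P q L * qPochInvZ (q^3) (n:ℤ) *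
           qPochInvZ (q^3) ((n:ℤ) + j) * qPochInvZ (q^3) ((L:ℤ) - 2*n - j))
        = q ^ ((L:ℤ) - (j + n) + n) *
          ((q^3) ^ ((n:ℤ) * (j + n)) * P q L * qPochInvZ (q^3) (n:ℤ) *
           qPochInvZ (q^3) (j + n) * qPochInvZ (q^3) ((L:ℤ) - n - (j + n)))
      have e1 : (L:ℤ) - (j + n) + n = (L:ℤ) - j := by ring
      have e3 : (L:ℤ) - n - (j + (n:ℤ)) = (L:ℤ) - 2*n - j := by ring
      have e2 : (j + (n:ℤ)) = (n:ℤ) + j := by ring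
      rw [e1, e3, e2]
    rw [Finset.sum_congr rfl (fun j _ => hL2 j)]
    exact intIccShiftToRange L n (by omega)
      (fun k : ℤ => q ^ ((L:ℤ) - k + n) *
          ((q^3) ^ ((n:ℤ) * k) * P q L * qPochInvZ (q^3) (n:ℤ) *
           qPochInvZ (q^3) k * qPochInvZ (q^3) ((L:ℤ) - n - k)))
      (fun z hz => by simp [qPochInvZ_neg (q^3) z hz])
      (fun z hz => by
        simp [qPochInvZ_neg (q^3) ((L:ℤ) - n - z) (by omega : (L:ℤ) - n - z < 0)])
  rw [Finset.sum_congr rfl hc]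
  have hd : ∀ n ∈ Finset.range (L+1), ∀ k ∈ Finset.range (L+1),
      q ^ ((L:ℤ) - k + n) *
          ((q^3) ^ ((n:ℤ) * (k:ℤ)) * P q L * qPochInvZ (q^3) (n:ℤ) *
           qPochInvZ (q^3) (k:ℤ) * qPochInvZ (q^3) ((L:ℤ) - n - k))
      = q ^ (L - k + n) * ((q^3) ^ (n * k) * P q L * (P q n)⁻¹ *
           (P q k)⁻¹ * qPochInvZ (q^3) ((L:ℤ) - n - k)) := by
    intro n hn k hk
    rw [Finset.mem_range] at hn hk
    have e1 : (L:ℤ) - k + n = ((L - k + n : ℕ) : ℤ) := by push_cast; omega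
    have e2 : (n:ℤ) * (k:ℤ) = ((n*k : ℕ) : ℤ) := by push_cast; ring
    rw [e1, e2, zpow_natCast, zpow_natCast, qPochInvZ_natCast, qPochInvZ_natCast]
    rfl
  rw [Finset.sum_congr rfl (fun n hn => Finset.sum_congr rfl (fun k hk => hd n hn k hk))]
  rw [coeff_mul, Finset.Nat.sum_antidiagonal_eq_sum_range_succ_mk, Finset.mul_sum]
  have he : ∀ N ∈ Finset.range (L+1),
      P q L * (PowerSeries.coeff (N, L-N).1 (G q) * PowerSeries.coeff (N, L-N).2 (E q q))
      = ∑ m ∈ Finset.range (N+1), q ^ (L - N + 2*m) * ((q^3) ^ (m * (N - m)) * P q L *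
          (P q m)⁻¹ * (P q (N - m))⁻¹ * (P q (L - N))⁻¹) := by
    intro N hN
    dsimp only
    rw [G, coeff_mk, coeff_E, Finset.sum_mul, Finset.mul_sum]
    refine Finset.sum_congr rfl fun m hm => ?_
    rw [pow_add]
    ring
  rw [Finset.sum_congr rfl he]
  rw [Finset.sum_sigma', Finset.sum_sigma']
  have hsub : ((Finset.range (L+1)).sigma (fun n => Finset.range (L - n + 1))) ⊆
      ((Finset.range (L+1)).sigma (fun _ => Finset.range (L+1))) := by
    intro p hp
    simp only [Finset.mem_sigma, Finset.mem_range] at hp ⊢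
    omega
  rw [← Finset.sum_subset hsub (fun p hp hnp => ?_)]
  swap
  · simp only [Finset.mem_sigma, Finset.mem_range] at hp hnp
    rw [qPochInvZ_neg (q^3) _ (by omega)]
    ring
  refine Finset.sum_nbij' (fun p => (⟨p.1 + p.2, p.1⟩ : (_ : ℕ) × ℕ))
    (fun p => (⟨p.2, p.1 - p.2⟩ : (_ : ℕ) × ℕ)) ?_ ?_ ?_ ?_ ?_
  · intro p hp
    simp only [Finset.mem_sigma, Finset.mem_range] at hp ⊢
    omega
  · intro p hp
    simp only [Finset.mem_sigma, Finset.mem_range] at hp ⊢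
    omega
  · intro p hp
    obtain ⟨n, k⟩ := p
    simp only [Finset.mem_sigma, Finset.mem_range] at hp
    simp only
    have e1 : n + k - n = k := by omega
    rw [e1]
  · intro p hp
    obtain ⟨N, m⟩ := p
    simp only [Finset.mem_sigma, Finset.mem_range] at hp
    simp only
    have e1 : m + (N - m) = N := by omega
    rw [e1]
  · intro p hp
    obtain ⟨n, k⟩ := p
    simp only [Finset.mem_sigma, Finset.mem_range] at hp
    simp only
    have e1 : L - k + n = L - (n + k) + 2*n := by omega
    have e2 : n + k - n = k := by omega
    have e3 : qPochInvZ (q^3) ((L:ℤ) - n - k) = (P q (L - (n + k)))⁻¹ := by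
      rw [qPochInvZ, if_pos (by omega)]
      show (qPoch (q^3) (q^3) (((L:ℤ) - n - k).toNat))⁻¹ = (P q (L - (n+k)))⁻¹
      congr 2
      omega
    rw [e1, e2, e3]

include hq hroot in
lemma main (L : ℕ) :
    (∑' n : ℕ, (-1 : ℂ) ^ n * q ^ ((3 * n ^ 2 + n) / 2) * qPoch (q ^ 3) (q ^ 3) L *
        qPochInvZ q ((L : ℤ) - 2 * n) * (qPoch (q ^ 3) (q ^ 3) n)⁻¹) =
    ∑ j ∈ Finset.Icc (-(L : ℤ)) (L : ℤ),
      q ^ ((L : ℤ) - j) * qTrinomial L j j (q ^ 3) := by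
  rw [lhs_eq hroot L, rhs_eq hq hroot L, final_series hroot]

end Final

end Capparelli

end

theorem capparelli_third_pair (L : ℕ) (q : ℂ) (hq : q ≠ 0) (hroot : ∀ k : ℕ, 0 < k → q ^ k ≠ 1) :
    (∑' n : ℕ, (-1 : ℂ) ^ n * q ^ ((3 * n ^ 2 + n) / 2) * qPoch (q ^ 3) (q ^ 3) L *
        qPochInvZ q ((L : ℤ) - 2 * n) * (qPoch (q ^ 3) (q ^ 3) n)⁻¹) =
    ∑ j ∈ Finset.Icc (-(L : ℤ)) (L : ℤ),
      q ^ ((L : ℤ) - j) * qTrinomial L j j (q ^ 3) := by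
  exact Capparelli.main hq hroot L
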